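/- arXiv:1502.00148 — 2 statements merged into one kernel-verified Lean document; each statement's English description precedes it below -/
import Mathlib

section
/- Fix x, y ∈ S such that u^α(x,y) < ∞ for every α > 0. Then for every α > 0 the integral ∫_S u^α(x,w) u^α(w,y) dm(w) is finite, and the function β ↦ u^β(x,y) (real-valued on (0,∞)) is differentiable at α with derivative d/dα u^α(x,y) = − ∫_S u^α(x,w) u^α(w,y) dm(w). -/
open MeasureTheory ENNReal

/-- Differentiability of the resolvent: if `u^α(x,y) < ∞` for all `α > 0`, then for every
`α > 0` the integral `∫ u^α(x,w) u^α(w,y) dm(w)` is finite and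
`β ↦ u^β(x,y)` is differentiable at `α` with derivative `-∫ u^α(x,w) u^α(w,y) dm(w)`. -/
theorem resolvent_hasDerivAt {S : Type*} [MeasurableSpace S] (m : Measure S)
    (u : ℝ → S → S → ℝ≥0∞)
    (humeas : ∀ α : ℝ, Measurable (fun q : S × S => u α q.1 q.2))
    (hres : ∀ α β : ℝ, 0 ≤ α → α ≤ β → ∀ x y : S,
      u α x y = u β x y + ENNReal.ofReal (β - α) * ∫⁻ w, u α x w * u β w y ∂m)
    (x y : S) (hfin : ∀ α : ℝ, 0 < α → u α x y < ⊤) :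
    ∀ α : ℝ, 0 < α →
      (∫⁻ w, u α x w * u α w y ∂m) < ⊤ ∧
      HasDerivAt (fun β : ℝ => (u β x y).toReal)
        (-(∫⁻ w, u α x w * u α w y ∂m).toReal) α := by
  -- monotonicity of `u` in the index
  have hmono : ∀ a b : ℝ, 0 ≤ a → a ≤ b → ∀ p q : S, u b p q ≤ u a p q := by
    intro a b ha hab p q
    rw [hres a b ha hab p q]; exact le_self_add
  intro α hα
  have hα0 : (0:ℝ) < α/2 := by positivity
  have hα1 : (0:ℝ) < α/4 := by positivity
  -- measurability helpers
  have hmx : ∀ a : ℝ, Measurable (fun w => u a x w) := fun a =>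
    (humeas a).comp (measurable_const.prodMk measurable_id)
  have hmy : ∀ a : ℝ, Measurable (fun w => u a w y) := fun a =>
    (humeas a).comp (measurable_id.prodMk measurable_const)
  set K : ℝ → ℝ → ℝ≥0∞ := fun a b => ∫⁻ w, u a x w * u b w y ∂m with hKdef
  -- finiteness of K (α/4) (α/2)
  have hfin0 : K (α/4) (α/2) ≠ ⊤ := by
    have h := hfin (α/4) hα1
    rw [hres (α/4) (α/2) hα1.le (by linarith) x y] at h
    have h2 := (ENNReal.add_lt_top.mp h).2
    intro htop
    rw [show (∫⁻ w, u (α/4) x w * u (α/2) w y ∂m) = K (α/4) (α/2) from rfl, htop,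
      ENNReal.mul_top] at h2
    · exact (lt_irrefl _ h2).elim
    · simp only [ne_eq, ENNReal.ofReal_eq_zero, not_le]; linarith
  -- finiteness of K (α/2) (α/2) and domination
  have hKmono : ∀ a b a' b' : ℝ, 0 ≤ a → a ≤ a' → 0 ≤ b → b ≤ b' → K a' b' ≤ K a b := by
    intro a b a' b' ha haa hb hbb
    exact lintegral_mono fun w => mul_le_mul' (hmono a a' ha haa x w) (hmono b b' hb hbb w y)
  have hK00 : K (α/2) (α/2) < ⊤ :=
    lt_of_le_of_lt (hKmono (α/4) (α/2) (α/2) (α/2) hα1.le (by linarith) hα0.le le_rfl)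
      (lt_top_iff_ne_top.2 hfin0)
  have hKfin : ∀ a b : ℝ, α/2 ≤ a → α/2 ≤ b → K a b ≠ ⊤ := by
    intro a b ha hb
    exact (lt_of_le_of_lt (hKmono (α/2) (α/2) a b hα0.le ha hα0.le hb) hK00).ne
  -- real-valued resolvent identity
  have hreal : ∀ a b : ℝ, α/2 ≤ a → a ≤ b →
      (u a x y).toReal = (u b x y).toReal + (b - a) * (K a b).toReal := by
    intro a b ha hab
    rw [hres a b (by linarith) hab x y,
      ENNReal.toReal_add (hfin b (by linarith)).ne
        (ENNReal.mul_ne_top ENNReal.ofReal_ne_top (hKfin a b ha (by linarith))),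
      ENNReal.toReal_mul, ENNReal.toReal_ofReal (by linarith)]
  -- pointwise bound, right side (β ≥ α)
  have hpt1 : ∀ β : ℝ, α ≤ β → ∀ w : S,
      u α w y ≤ u β w y + ENNReal.ofReal (2*(β-α)/α) * u (α/2) w y := by
    intro β hβ w
    have h1 := hres α β hα.le hβ w y
    have hJJ0 : (∫⁻ z, u α w z * u β z y ∂m) ≤ ∫⁻ z, u (α/2) w z * u β z y ∂m :=
      lintegral_mono fun z => mul_le_mul' (hmono (α/2) α hα0.le (by linarith) w z) le_rfl
    have hJ0 : ENNReal.ofReal (β - α/2) * (∫⁻ z, u (α/2) w z * u β z y ∂m) ≤ u (α/2) w y := by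
      rw [hres (α/2) β hα0.le (by linarith) w y]; exact le_add_self
    have hc : (0:ℝ) ≤ 2*(β-α)/α := div_nonneg (by linarith) hα.le
    have hle : (β - α : ℝ) ≤ (2*(β-α)/α) * (β - α/2) := by
      rw [div_mul_eq_mul_div, le_div_iff₀ hα]; nlinarith
    have key : ENNReal.ofReal (β - α) * (∫⁻ z, u α w z * u β z y ∂m)
        ≤ ENNReal.ofReal (2*(β-α)/α) * u (α/2) w y := by
      calc ENNReal.ofReal (β - α) * (∫⁻ z, u α w z * u β z y ∂m)
          ≤ ENNReal.ofReal ((2*(β-α)/α) * (β - α/2)) * (∫⁻ z, u (α/2) w z * u β z y ∂m) :=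
            mul_le_mul' (ENNReal.ofReal_le_ofReal hle) hJJ0
        _ = ENNReal.ofReal (2*(β-α)/α) *
            (ENNReal.ofReal (β - α/2) * ∫⁻ z, u (α/2) w z * u β z y ∂m) := by
            rw [ENNReal.ofReal_mul hc, mul_assoc]
        _ ≤ _ := mul_le_mul' le_rfl hJ0
    rw [h1]
    exact add_le_add le_rfl key
  -- pointwise bound, left side (α/2 ≤ β ≤ α)
  have hpt2 : ∀ β : ℝ, α/2 ≤ β → β ≤ α → ∀ w : S,
      u β x w ≤ u α x w + ENNReal.ofReal (2*(α-β)/α) * u (α/2) x w := by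
    intro β hβl hβr w
    have h1 := hres β α (by linarith) hβr x w
    have hJJ0 : (∫⁻ z, u β x z * u α z w ∂m) ≤ ∫⁻ z, u (α/2) x z * u α z w ∂m :=
      lintegral_mono fun z => mul_le_mul' (hmono (α/2) β hα0.le hβl x z) le_rfl
    have hJ0 : ENNReal.ofReal (α - α/2) * (∫⁻ z, u (α/2) x z * u α z w ∂m) ≤ u (α/2) x w := by
      rw [hres (α/2) α hα0.le (by linarith) x w]; exact le_add_self
    have hc : (0:ℝ) ≤ 2*(α-β)/α := div_nonneg (by linarith) hα.le
    have hle : (α - β : ℝ) ≤ (2*(α-β)/α) * (α - α/2) := by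
      rw [div_mul_eq_mul_div, le_div_iff₀ hα]; nlinarith
    have key : ENNReal.ofReal (α - β) * (∫⁻ z, u β x z * u α z w ∂m)
        ≤ ENNReal.ofReal (2*(α-β)/α) * u (α/2) x w := by
      calc ENNReal.ofReal (α - β) * (∫⁻ z, u β x z * u α z w ∂m)
          ≤ ENNReal.ofReal ((2*(α-β)/α) * (α - α/2)) * (∫⁻ z, u (α/2) x z * u α z w ∂m) :=
            mul_le_mul' (ENNReal.ofReal_le_ofReal hle) hJJ0
        _ = ENNReal.ofReal (2*(α-β)/α) *
            (ENNReal.ofReal (α - α/2) * ∫⁻ z, u (α/2) x z * u α z w ∂m) := by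
            rw [ENNReal.ofReal_mul hc, mul_assoc]
        _ ≤ _ := mul_le_mul' le_rfl hJ0
    rw [h1]
    exact add_le_add le_rfl key
  -- integral bound, right side
  have hK1 : ∀ β : ℝ, α ≤ β →
      K α α ≤ K α β + ENNReal.ofReal (2*(β-α)/α) * K (α/2) (α/2) := by
    intro β hβ
    calc K α α ≤ ∫⁻ w, (u α x w * u β w y
          + ENNReal.ofReal (2*(β-α)/α) * (u (α/2) x w * u (α/2) w y)) ∂m := by
          apply lintegral_mono
          intro w
          calc u α x w * u α w y
              ≤ u α x w * (u β w y + ENNReal.ofReal (2*(β-α)/α) * u (α/2) w y) :=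
                mul_le_mul' le_rfl (hpt1 β hβ w)
            _ = u α x w * u β w y
                + ENNReal.ofReal (2*(β-α)/α) * (u α x w * u (α/2) w y) := by ring
            _ ≤ u α x w * u β w y
                + ENNReal.ofReal (2*(β-α)/α) * (u (α/2) x w * u (α/2) w y) := by
                exact add_le_add le_rfl (mul_le_mul' le_rfl
                  (mul_le_mul' (hmono (α/2) α hα0.le (by linarith) x w) le_rfl))
      _ = K α β + ENNReal.ofReal (2*(β-α)/α) * K (α/2) (α/2) := by
          rw [lintegral_add_left (f := fun w => u α x w * u β w y) ((hmx α).mul (hmy β)),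
            lintegral_const_mul' _ _ ENNReal.ofReal_ne_top]
  -- integral bound, left side
  have hK2 : ∀ β : ℝ, α/2 ≤ β → β ≤ α →
      K β α ≤ K α α + ENNReal.ofReal (2*(α-β)/α) * K (α/2) (α/2) := by
    intro β hβl hβr
    calc K β α ≤ ∫⁻ w, (u α x w * u α w y
          + ENNReal.ofReal (2*(α-β)/α) * (u (α/2) x w * u (α/2) w y)) ∂m := by
          apply lintegral_mono
          intro w
          calc u β x w * u α w y
              ≤ (u α x w + ENNReal.ofReal (2*(α-β)/α) * u (α/2) x w) * u α w y :=
                mul_le_mul' (hpt2 β hβl hβr w) le_rfl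
            _ = u α x w * u α w y
                + ENNReal.ofReal (2*(α-β)/α) * (u (α/2) x w * u α w y) := by ring
            _ ≤ u α x w * u α w y
                + ENNReal.ofReal (2*(α-β)/α) * (u (α/2) x w * u (α/2) w y) := by
                exact add_le_add le_rfl (mul_le_mul' le_rfl
                  (mul_le_mul' le_rfl (hmono (α/2) α hα0.le (by linarith) w y)))
      _ = K α α + ENNReal.ofReal (2*(α-β)/α) * K (α/2) (α/2) := by
          rw [lintegral_add_left (f := fun w => u α x w * u α w y) ((hmx α).mul (hmy α)),
            lintegral_const_mul' _ _ ENNReal.ofReal_ne_top]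
  -- pass to real numbers
  set k0 : ℝ := (K (α/2) (α/2)).toReal with hk0def
  have hk0 : 0 ≤ k0 := ENNReal.toReal_nonneg
  set L : ℝ := (K α α).toReal with hLdef
  have hKααne : K α α ≠ ⊤ := hKfin α α (by linarith) (by linarith)
  -- key quadratic estimate
  have hest : ∀ β : ℝ, α/2 ≤ β →
      |(u β x y).toReal - (u α x y).toReal + (β - α) * L| ≤ (2/α * k0) * (β - α)^2 := by
    intro β hβ
    rcases le_total α β with hb | hb
    · -- α ≤ β
      have hfeq := hreal α β (by linarith) hb
      have h1 : (K α β).toReal ≤ L :=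
        ENNReal.toReal_mono hKααne (hKmono α α α β hα.le le_rfl hα.le hb)
      have h2 : L ≤ (K α β).toReal + (2*(β-α)/α) * k0 := by
        have := ENNReal.toReal_mono
          (by exact ENNReal.add_ne_top.2 ⟨hKfin α β (by linarith) (by linarith),
            ENNReal.mul_ne_top ENNReal.ofReal_ne_top hK00.ne⟩) (hK1 β hb)
        rwa [ENNReal.toReal_add (hKfin α β (by linarith) (by linarith))
          (ENNReal.mul_ne_top ENNReal.ofReal_ne_top hK00.ne),
          ENNReal.toReal_mul, ENNReal.toReal_ofReal (div_nonneg (by linarith) hα.le)] at this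
      have hexp : (u β x y).toReal - (u α x y).toReal + (β - α) * L
          = (β - α) * (L - (K α β).toReal) := by rw [hfeq]; ring
      rw [hexp, abs_of_nonneg (mul_nonneg (by linarith) (by linarith))]
      have h3 : L - (K α β).toReal ≤ 2*(β-α)/α * k0 := by linarith
      have h4 : (0:ℝ) ≤ β - α := by linarith
      have h5 : 2*(β-α)/α * k0 = 2/α * k0 * (β - α) := by field_simp
      nlinarith [mul_le_mul_of_nonneg_left h3 h4]
    · -- β ≤ α
      have hfeq := hreal β α hβ hb
      have h1 : L ≤ (K β α).toReal :=
        ENNReal.toReal_mono (hKfin β α hβ (by linarith)) (hKmono β α α α (hα0.le.trans hβ) hb hα.le le_rfl)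
      have h2 : (K β α).toReal ≤ L + (2*(α-β)/α) * k0 := by
        have := ENNReal.toReal_mono
          (by exact ENNReal.add_ne_top.2 ⟨hKααne,
            ENNReal.mul_ne_top ENNReal.ofReal_ne_top hK00.ne⟩) (hK2 β hβ hb)
        rwa [ENNReal.toReal_add hKααne
          (ENNReal.mul_ne_top ENNReal.ofReal_ne_top hK00.ne),
          ENNReal.toReal_mul, ENNReal.toReal_ofReal (div_nonneg (by linarith) hα.le)] at this
      have hexp : (u β x y).toReal - (u α x y).toReal + (β - α) * L
          = (α - β) * ((K β α).toReal - L) := by rw [hfeq]; ring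
      rw [hexp, abs_of_nonneg (mul_nonneg (by linarith) (by linarith))]
      have h3 : (K β α).toReal - L ≤ 2*(α-β)/α * k0 := by linarith
      have h4 : (0:ℝ) ≤ α - β := by linarith
      have h5 : 2*(α-β)/α * k0 = 2/α * k0 * (α - β) := by field_simp
      nlinarith [mul_le_mul_of_nonneg_left h3 h4]
  refine ⟨lt_top_iff_ne_top.2 hKααne, ?_⟩
  rw [hasDerivAt_iff_isLittleO, Asymptotics.isLittleO_iff]
  intro c hc
  set C : ℝ := 2/α * k0 with hCdef
  have hC : 0 ≤ C := mul_nonneg (by positivity) hk0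
  have hδ : (0:ℝ) < min (α/2) (c/(C+1)) := lt_min hα0 (by positivity)
  filter_upwards [Metric.ball_mem_nhds α hδ] with β hβ
  rw [Metric.mem_ball, Real.dist_eq] at hβ
  have hβ1 : |β - α| < α/2 := lt_of_lt_of_le hβ (min_le_left _ _)
  have hβ2 : |β - α| < c/(C+1) := lt_of_lt_of_le hβ (min_le_right _ _)
  have hβ3 : α/2 ≤ β := by
    have := abs_lt.mp hβ1
    linarith [this.1]
  have hest' := hest β hβ3
  have habs : |β - α| ^ 2 = (β - α)^2 := sq_abs _
  have hnn : 0 ≤ |β - α| := abs_nonneg _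
  calc ‖(u β x y).toReal - (u α x y).toReal - (β - α) • (-(K α α).toReal)‖
      = |(u β x y).toReal - (u α x y).toReal + (β - α) * L| := by
        rw [Real.norm_eq_abs, smul_eq_mul, hLdef]; ring_nf
    _ ≤ C * (β - α)^2 := hest'
    _ = C * |β - α| * |β - α| := by rw [← habs]; ring
    _ ≤ c * ‖β - α‖ := by
        rw [Real.norm_eq_abs]
        have h6 : C * |β - α| ≤ c := by
          have h7 : C * |β - α| ≤ C * (c/(C+1)) := mul_le_mul_of_nonneg_left hβ2.le hC
          have h8 : C * (c/(C+1)) ≤ c := by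
            rw [mul_div_assoc'] at *
            rw [div_le_iff₀ (by linarith)]
            nlinarith
          linarith
        nlinarith
end

section
/- For every measurable f : [0,∞) → [0,∞], every n > 0, and every α ≥ 0, one has (with all integrals and sums taken in [0,∞]): ∫_0^∞ e^{−αt} ( ∑_{j=1}^∞ ((nt)^j / j!) e^{−nt} ∫_0^∞ (s^{j−1} n^j / (j−1)!) e^{−ns} f(s) ds ) dt = (n^2 / (α+n)^2) ∫_0^∞ e^{−s nα/(α+n)} f(s) ds. (This is the scalar form of Lemma 4.1 of the paper: the α-resolvent of the semigroup subordinated by a compound Poisson subordinator with rate n and exponential(n) jumps satisfies u_{(n)}^α(x,y) = (1+α/n)^{−2} u^{α/(1+α/n)}(x,y).) -/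
open MeasureTheory ENNReal

lemma aux_integral (k : ℕ) {r : ℝ} (hr : 0 < r) :
    ∫ x in Set.Ioi (0:ℝ), x ^ k * Real.exp (-(r * x))
      = Nat.factorial k / r ^ (k + 1) := by
  have h := Real.integral_rpow_mul_exp_neg_mul_Ioi
    (a := (k : ℝ) + 1) (by positivity) hr
  have h2 : ∫ t in Set.Ioi (0:ℝ), t ^ (((k:ℝ) + 1) - 1) * Real.exp (-(r * t))
      = ∫ x in Set.Ioi (0:ℝ), x ^ k * Real.exp (-(r * x)) := by
    refine setIntegral_congr_fun measurableSet_Ioi fun t _ => ?_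
    rw [add_sub_cancel_right, Real.rpow_natCast]
  rw [h2] at h
  rw [h, Real.Gamma_nat_eq_factorial,
    show ((k:ℝ) + 1) = ((k + 1 : ℕ) : ℝ) by push_cast; ring,
    Real.rpow_natCast, one_div, inv_pow]
  ring

lemma aux_integrable (k : ℕ) {r : ℝ} (hr : 0 < r) :
    IntegrableOn (fun x : ℝ => x ^ k * Real.exp (-(r * x))) (Set.Ioi 0) := by
  have := integrableOn_rpow_mul_exp_neg_mul_rpow (s := (k:ℝ)) (p := 1)
    (lt_of_lt_of_le neg_one_lt_zero (Nat.cast_nonneg k)) one_pos hr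
  refine this.congr_fun (fun x hx => ?_) measurableSet_Ioi
  beta_reduce
  rw [Real.rpow_natCast, Real.rpow_one, neg_mul]

lemma aux_lint (k : ℕ) {r : ℝ} (hr : 0 < r) :
    ∫⁻ x in Set.Ici (0:ℝ), ENNReal.ofReal (x ^ k * Real.exp (-(r * x)))
      = ENNReal.ofReal (Nat.factorial k / r ^ (k + 1)) := by
  have hnn : 0 ≤ᵐ[volume.restrict (Set.Ioi (0:ℝ))]
      fun x : ℝ => x ^ k * Real.exp (-(r * x)) := by
    refine (ae_restrict_iff' measurableSet_Ioi).mpr (ae_of_all _ fun x hx => ?_)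
    have hx' : (0:ℝ) < x := hx
    positivity
  rw [← Measure.restrict_congr_set Ioi_ae_eq_Ici,
    ← ofReal_integral_eq_lintegral_ofReal (aux_integrable k hr) hnn, aux_integral k hr]

lemma exp_tsum' (x : ℝ) : Real.exp x = ∑' j : ℕ, x ^ j / j.factorial := by
  rw [Real.exp_eq_exp_ℝ, NormedSpace.exp_eq_tsum_div]

/-- Scalar form of Lemma 4.1 of the paper: the `α`-resolvent of a semigroup subordinated by a
compound Poisson subordinator with rate `n` and exponential(`n`) jumps is
`(1+α/n)⁻² u^{α/(1+α/n)}`, i.e.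
`∫_0^∞ e^{-αt} Σ_{j≥1} ((nt)^j/j!) e^{-nt} ∫_0^∞ (s^{j-1} n^j/(j-1)!) e^{-ns} f(s) ds dt
  = (n²/(α+n)²) ∫_0^∞ e^{-s nα/(α+n)} f(s) ds`. -/
theorem subordinated_resolvent_scalar (f : ℝ → ℝ≥0∞) (hf : Measurable f)
    (n : ℝ) (hn : 0 < n) (α : ℝ) (hα : 0 ≤ α) :
    ∫⁻ t in Set.Ici (0 : ℝ),
        ENNReal.ofReal (Real.exp (-α * t)) *
          ∑' j : ℕ,
            ENNReal.ofReal ((n * t) ^ (j + 1) / (Nat.factorial (j + 1)) *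
                Real.exp (-n * t)) *
              ∫⁻ s in Set.Ici (0 : ℝ),
                ENNReal.ofReal (s ^ j * n ^ (j + 1) / (Nat.factorial j) *
                    Real.exp (-n * s)) * f s
      = ENNReal.ofReal (n ^ 2 / (α + n) ^ 2) *
          ∫⁻ s in Set.Ici (0 : ℝ),
            ENNReal.ofReal (Real.exp (-(n * α / (α + n)) * s)) * f s := by
  have hαn : (0:ℝ) < α + n := by linarith
  set I : ℕ → ℝ≥0∞ := fun j => ∫⁻ s in Set.Ici (0:ℝ),
      ENNReal.ofReal (s ^ j * n ^ (j + 1) / (Nat.factorial j) * Real.exp (-n * s)) * f s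
    with hI
  -- measurability of inner integrands
  have hmeasg : ∀ j : ℕ, Measurable fun s : ℝ =>
      ENNReal.ofReal (s ^ j * n ^ (j + 1) / (Nat.factorial j) * Real.exp (-n * s)) * f s := by
    intro j
    exact (((((measurable_id.pow_const j).mul_const _).div_const _).mul
      ((measurable_id.const_mul (-n)).exp)).ennreal_ofReal).mul hf
  have hmeasT : ∀ j : ℕ, Measurable fun t : ℝ =>
      ENNReal.ofReal (Real.exp (-α * t)) *
        ENNReal.ofReal ((n * t) ^ (j + 1) / (Nat.factorial (j + 1)) * Real.exp (-n * t)) := by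
    intro j
    exact ((measurable_id.const_mul (-α)).exp.ennreal_ofReal).mul
      (((((measurable_id.const_mul n).pow_const _).div_const _).mul
        ((measurable_id.const_mul (-n)).exp)).ennreal_ofReal)
  -- Step 1: LHS as a sum of products
  have step1 : (∫⁻ t in Set.Ici (0 : ℝ),
        ENNReal.ofReal (Real.exp (-α * t)) *
          ∑' j : ℕ,
            ENNReal.ofReal ((n * t) ^ (j + 1) / (Nat.factorial (j + 1)) * Real.exp (-n * t)) * I j)
      = ∑' j : ℕ, (∫⁻ t in Set.Ici (0 : ℝ),
          ENNReal.ofReal (Real.exp (-α * t)) *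
            ENNReal.ofReal ((n * t) ^ (j + 1) / (Nat.factorial (j + 1)) * Real.exp (-n * t))) * I j := by
    simp_rw [← ENNReal.tsum_mul_left, ← mul_assoc]
    rw [lintegral_tsum fun j => ((hmeasT j).mul_const (I j)).aemeasurable]
    exact tsum_congr fun j => lintegral_mul_const _ (hmeasT j)
  rw [step1]
  -- Step 2: compute the t-integral
  have step2 : ∀ j : ℕ, (∫⁻ t in Set.Ici (0 : ℝ),
        ENNReal.ofReal (Real.exp (-α * t)) *
          ENNReal.ofReal ((n * t) ^ (j + 1) / (Nat.factorial (j + 1)) * Real.exp (-n * t)))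
      = ENNReal.ofReal (n ^ (j + 1) / (α + n) ^ (j + 2)) := by
    intro j
    have hjf : ((Nat.factorial (j+1) : ℝ)) ≠ 0 := Nat.cast_ne_zero.mpr (j+1).factorial_ne_zero
    have hcongr : ∀ t : ℝ,
        ENNReal.ofReal (Real.exp (-α * t)) *
          ENNReal.ofReal ((n * t) ^ (j + 1) / (Nat.factorial (j + 1)) * Real.exp (-n * t))
        = ENNReal.ofReal (n ^ (j + 1) / (Nat.factorial (j + 1))) *
            ENNReal.ofReal (t ^ (j + 1) * Real.exp (-((α + n) * t))) := by
      intro t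
      rw [← ENNReal.ofReal_mul (Real.exp_nonneg _), ← ENNReal.ofReal_mul (by positivity)]
      congr 1
      rw [mul_pow, show -((α+n)*t) = -α*t + -n*t by ring, Real.exp_add]
      ring
    have hm : Measurable fun t : ℝ => ENNReal.ofReal (t ^ (j+1) * Real.exp (-((α+n) * t))) :=
      ((measurable_id.pow_const (j+1)).mul
        ((measurable_id.const_mul (α+n)).neg.exp)).ennreal_ofReal
    simp_rw [hcongr]
    rw [lintegral_const_mul _ hm, aux_lint (j+1) hαn, ← ENNReal.ofReal_mul (by positivity)]
    congr 1
    rw [div_mul_div_comm, mul_comm ((Nat.factorial (j+1) : ℝ)), mul_div_mul_right _ _ hjf]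
  simp_rw [step2]
  -- Step 3: push the constant inside I j and swap sum and integral
  have step3 : ∀ j : ℕ, ENNReal.ofReal (n ^ (j + 1) / (α + n) ^ (j + 2)) * I j
      = ∫⁻ s in Set.Ici (0:ℝ),
          ENNReal.ofReal (n ^ (j + 1) / (α + n) ^ (j + 2) *
            (s ^ j * n ^ (j + 1) / (Nat.factorial j) * Real.exp (-n * s))) * f s := by
    intro j
    rw [hI, ← lintegral_const_mul _ (hmeasg j)]
    refine lintegral_congr fun s => ?_
    rw [← mul_assoc, ← ENNReal.ofReal_mul (by positivity)]
  simp_rw [step3]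
  have hmeasg2 : ∀ j : ℕ, Measurable fun s : ℝ =>
      ENNReal.ofReal (n ^ (j + 1) / (α + n) ^ (j + 2) *
        (s ^ j * n ^ (j + 1) / (Nat.factorial j) * Real.exp (-n * s))) * f s := by
    intro j
    exact ((measurable_const.mul
      ((((measurable_id.pow_const j).mul_const _).div_const _).mul
        ((measurable_id.const_mul (-n)).exp))).ennreal_ofReal).mul hf
  rw [← lintegral_tsum fun j => (hmeasg2 j).aemeasurable]
  -- Step 5: pointwise evaluation of the sum
  have step5 : ∀ s ∈ Set.Ici (0:ℝ), (∑' j : ℕ,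
      ENNReal.ofReal (n ^ (j + 1) / (α + n) ^ (j + 2) *
        (s ^ j * n ^ (j + 1) / (Nat.factorial j) * Real.exp (-n * s))) * f s)
      = ENNReal.ofReal (n ^ 2 / (α + n) ^ 2) *
          (ENNReal.ofReal (Real.exp (-(n * α / (α + n)) * s)) * f s) := by
    intro s hs
    have hs' : (0:ℝ) ≤ s := hs
    have h0 : α + n ≠ 0 := by positivity
    have h1 : ∀ j : ℕ, n^(j+1)/(α+n)^(j+2) * (s^j * n^(j+1)/(Nat.factorial j) * Real.exp (-n*s))
        = (n^2/(α+n)^2 * Real.exp (-n*s)) * ((s*n^2/(α+n))^j / (Nat.factorial j)) := by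
      intro j
      have hjf : (Nat.factorial j : ℝ) ≠ 0 := Nat.cast_ne_zero.mpr j.factorial_ne_zero
      rw [div_pow]
      field_simp
      ring
    have hsummable : Summable fun j : ℕ => n^(j+1)/(α+n)^(j+2) *
        (s^j * n^(j+1)/(Nat.factorial j) * Real.exp (-n*s)) :=
      ((Real.summable_pow_div_factorial (s*n^2/(α+n))).mul_left _).congr
        fun j => (h1 j).symm
    have hnonneg : ∀ j : ℕ, 0 ≤ n^(j+1)/(α+n)^(j+2) *
        (s^j * n^(j+1)/(Nat.factorial j) * Real.exp (-n*s)) := by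
      intro j; positivity
    rw [ENNReal.tsum_mul_right, ← mul_assoc,
      ← ENNReal.ofReal_mul (by positivity),
      ← ENNReal.ofReal_tsum_of_nonneg hnonneg hsummable]
    congr 2
    simp_rw [h1]
    rw [tsum_mul_left, ← exp_tsum', mul_assoc, ← Real.exp_add]
    congr 2
    field_simp
    ring
  have hmlast : Measurable fun s : ℝ =>
      ENNReal.ofReal (Real.exp (-(n * α / (α + n)) * s)) * f s :=
    ((measurable_id.const_mul _).exp.ennreal_ofReal).mul hf
  rw [setLIntegral_congr_fun measurableSet_Ici step5]
  exact lintegral_const_mul _ hmlast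
end
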